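/- Let α, β ∈ ℝ and let ρ : 𝕋¹ → ℂ be continuous. Then the following are equivalent: (i) there exists a continuous function φ* : 𝕋¹ → ℂ satisfying φ*(x + α) = e^{2πiβ} φ*(x) + ρ(x) for all x ∈ 𝕋¹; (ii) there exists a continuous function φ : 𝕋² → ℂ satisfying φ(x + α, y − β) = φ(x, y) + e^{2πi(y−β)} ρ(x) for all (x,y) ∈ 𝕋². -/

import Mathlib

open Real MeasureTheory

/-- The cylindrical vortex `F(x,z) = (x + α, e^{2πiβ} z + ρ(x))` on `𝕋¹ × ℂ` is reducible
if and only if the cylindrical cascade `G((x,y),z) = ((x + α, y - β), z + e^{2πi(y-β)} ρ(x))`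
on `𝕋² × ℂ` is reducible.  Here `e : 𝕋¹ → ℂ` denotes the character `t ↦ e^{2πit}`. -/
theorem vortex_reducible_iff_cascade_reducible
    (α β : ℝ) (ρ : AddCircle (1 : ℝ) → ℂ) (hρ : Continuous ρ)
    (e : AddCircle (1 : ℝ) → ℂ)
    (he : ∀ t : ℝ, e (t : AddCircle (1 : ℝ)) = Complex.exp (2 * π * Complex.I * t)) :
    (∃ φs : AddCircle (1 : ℝ) → ℂ, Continuous φs ∧
        ∀ x : AddCircle (1 : ℝ),
          φs (x + (α : AddCircle (1 : ℝ))) = Complex.exp (2 * π * Complex.I * β) * φs x + ρ x)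
    ↔
    (∃ φ : AddCircle (1 : ℝ) × AddCircle (1 : ℝ) → ℂ, Continuous φ ∧
        ∀ x y : AddCircle (1 : ℝ),
          φ (x + (α : AddCircle (1 : ℝ)), y - (β : AddCircle (1 : ℝ)))
            = φ (x, y) + e (y - (β : AddCircle (1 : ℝ))) * ρ x) := by
  haveI : Fact ((0:ℝ) < 1) := ⟨one_pos⟩
  set c : ℂ := Complex.exp (2 * π * Complex.I * β) with hc
  -- continuity of `e`
  have he_cont : Continuous e := by
    have h : Continuous fun t : ℝ => e (t : AddCircle (1:ℝ)) := by
      simp only [he]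
      exact Complex.continuous_exp.comp (by fun_prop)
    rw [isQuotientMap_quotient_mk'.continuous_iff]
    exact h
  -- `e (y - β) * c = e y`
  have heb : ∀ y : AddCircle (1:ℝ), e (y - (β : AddCircle (1:ℝ))) * c = e y := by
    intro y
    induction y using QuotientAddGroup.induction_on with
    | H s =>
      have h1 : ((s : ℝ) : AddCircle (1:ℝ)) - (β : AddCircle (1:ℝ))
          = ((s - β : ℝ) : AddCircle (1:ℝ)) := by norm_cast
      rw [h1, he, he, hc, ← Complex.exp_add]
      congr 1
      push_cast
      ring
  -- `e (β - y) = c * e (-y)` and `e (β - y) * e (y - β) = 1`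
  have hbe : ∀ y : AddCircle (1:ℝ), e ((β : AddCircle (1:ℝ)) - y) = c * e (-y) := by
    intro y
    induction y using QuotientAddGroup.induction_on with
    | H s =>
      have h1 : (β : AddCircle (1:ℝ)) - ((s : ℝ) : AddCircle (1:ℝ))
          = ((β - s : ℝ) : AddCircle (1:ℝ)) := by norm_cast
      have h2 : -((s : ℝ) : AddCircle (1:ℝ)) = ((-s : ℝ) : AddCircle (1:ℝ)) := by norm_cast
      rw [h1, h2, he, he, hc, ← Complex.exp_add]
      congr 1
      push_cast
      ring
  have hinv : ∀ y : AddCircle (1:ℝ),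
      e ((β : AddCircle (1:ℝ)) - y) * e (y - (β : AddCircle (1:ℝ))) = 1 := by
    intro y
    induction y using QuotientAddGroup.induction_on with
    | H s =>
      have h1 : (β : AddCircle (1:ℝ)) - ((s : ℝ) : AddCircle (1:ℝ))
          = ((β - s : ℝ) : AddCircle (1:ℝ)) := by norm_cast
      have h2 : ((s : ℝ) : AddCircle (1:ℝ)) - (β : AddCircle (1:ℝ))
          = ((s - β : ℝ) : AddCircle (1:ℝ)) := by norm_cast
      rw [h1, h2, he, he, ← Complex.exp_add, ← Complex.exp_zero]
      congr 1
      push_cast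
      ring
  constructor
  · -- vortex reducible → cascade reducible
    rintro ⟨φs, hφs, hEq⟩
    refine ⟨fun p => e p.2 * φs p.1, by fun_prop, fun x y => ?_⟩
    show e (y - (β : AddCircle (1:ℝ))) * φs (x + (α : AddCircle (1:ℝ)))
        = e y * φs x + e (y - (β : AddCircle (1:ℝ))) * ρ x
    rw [hEq x, ← heb y]
    ring
  · -- cascade reducible → vortex reducible
    rintro ⟨φ, hφ, hEq⟩
    refine ⟨fun x => ∫ y : AddCircle (1:ℝ), e (-y) * φ (x, y), ?_, ?_⟩
    · -- continuity of the parametric integral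
      have := continuous_parametric_integral_of_continuous
        (X := AddCircle (1:ℝ)) (Y := AddCircle (1:ℝ)) (E := ℂ) (μ := volume)
        (f := fun x y => e (-y) * φ (x, y))
        (by fun_prop) (s := Set.univ) isCompact_univ
      simpa [Measure.restrict_univ] using this
    · intro x
      have hint : ∀ x' : AddCircle (1:ℝ),
          Integrable (fun y : AddCircle (1:ℝ) => e (-y) * φ (x', y)) volume := by
        intro x'
        exact Continuous.integrable_of_hasCompactSupport (by fun_prop)
          (HasCompactSupport.of_compactSpace _)
      -- translate the integration variable by `-β`
      have hshift :
          (∫ y : AddCircle (1:ℝ), e (-y) * φ (x + (α : AddCircle (1:ℝ)), y))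
            = ∫ y : AddCircle (1:ℝ), e (-(y - (β : AddCircle (1:ℝ))))
                * φ (x + (α : AddCircle (1:ℝ)), y - (β : AddCircle (1:ℝ))) := by
        have := integral_add_right_eq_self
          (μ := (volume : Measure (AddCircle (1:ℝ))))
          (fun y : AddCircle (1:ℝ) => e (-y) * φ (x + (α : AddCircle (1:ℝ)), y))
          (-(β : AddCircle (1:ℝ)))
        simp only [← sub_eq_add_neg] at this
        exact this.symm
      show (∫ y : AddCircle (1:ℝ), e (-y) * φ (x + (α : AddCircle (1:ℝ)), y))
          = c * (∫ y : AddCircle (1:ℝ), e (-y) * φ (x, y)) + ρ x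
      rw [hshift]
      have hpt : ∀ y : AddCircle (1:ℝ),
          e (-(y - (β : AddCircle (1:ℝ))))
              * φ (x + (α : AddCircle (1:ℝ)), y - (β : AddCircle (1:ℝ)))
            = c * (e (-y) * φ (x, y)) + ρ x := by
        intro y
        rw [neg_sub, hEq x y]
        linear_combination (φ (x, y)) * hbe y + (ρ x) * hinv y
      simp only [hpt]
      rw [integral_add ((hint x).const_mul c) (integrable_const _),
        integral_const_mul, integral_const]
      have : (volume (Set.univ : Set (AddCircle (1:ℝ)))).toReal = 1 := by
        simp [AddCircle.measure_univ]
      rw [Measure.real, this, one_smul]
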